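/- Let k be a commutative ring which is a ℚ-algebra and A an associative unital k-algebra. The map θ : A^ℕ → A^ℕ defined by θ(a)_n = Σ_{m=0}^{n} (n choose m)·a_m is a k-algebra isomorphism from (A^ℕ, ·^1) to A^ℕ with the pointwise product: it is k-linear, sends J = (1,0,0,…) to the constant sequence 1, satisfies θ(a ·^1 b)_n = θ(a)_n·θ(b)_n for all n, and has two-sided inverse θ̄ given by θ̄(a)_m = Σ_{n=0}^{m} (m choose n)·(−1)^{m−n}·a_n. -/

import Mathlib

open Finset

/-- The `lam`-weighted Hurwitz product on sequences:
`(a ·^lam b)_n = ∑_{r+s+t=n} (n!/(r!·s!·t!)) · lam^t · a_{r+t} · b_{s+t}`,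
the sum ranging over triples `(r,s,t)` with `r+s+t = n`, enumerated as
`r = x.1`, `s = y.1`, `t = y.2`. -/
noncomputable def hur {k A : Type*} [CommRing k] [Ring A] [Algebra k A]
    (lam : k) (a b : ℕ → A) : ℕ → A := fun n =>
  ∑ x ∈ Finset.HasAntidiagonal.antidiagonal n, ∑ y ∈ Finset.HasAntidiagonal.antidiagonal x.2,
    (n.factorial / (x.1.factorial * y.1.factorial * y.2.factorial)) •
      (lam ^ y.2 • (a (x.1 + y.2) * b (y.1 + y.2)))

/-- The sequence `J = (1,0,0,…)`, the unit for the weighted Hurwitz products. -/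
def Jseq (A : Type*) [One A] [Zero A] : ℕ → A := fun n => if n = 0 then 1 else 0

/-- The map `θ(a)_n = ∑_{m=0}^{n} (n choose m) · a_m`. -/
def theta {A : Type*} [Ring A] (a : ℕ → A) : ℕ → A := fun n =>
  ∑ m ∈ Finset.range (n + 1), n.choose m • a m

/-- The map `θ̄(a)_m = ∑_{n=0}^{m} (m choose n) · (−1)^{m−n} · a_n`. -/
def thetaBar {A : Type*} [Ring A] (a : ℕ → A) : ℕ → A := fun m =>
  ∑ n ∈ Finset.range (m + 1), m.choose n • ((-1 : ℤ) ^ (m - n) • a n)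

lemma negpow_split {N d : ℕ} (h : d ≤ N) : (-1:ℤ)^(N-d) = (-1)^N * (-1)^d := by
  have e : N - d + 2*d = N + d := by omega
  calc (-1:ℤ)^(N-d) = (-1)^(N-d) * ((-1)^2)^d := by norm_num
    _ = (-1)^(N-d+2*d) := by rw [← pow_mul, ← pow_add]
    _ = (-1)^(N+d) := by rw [e]
    _ = (-1)^N*(-1)^d := pow_add _ _ _

lemma inv_key {m l : ℕ} (hl : l ≤ m) :
    ∑ n ∈ Ico l (m+1), (-1:ℤ)^(n-l) * (m.choose n * n.choose l)
      = if m = l then 1 else 0 := by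
  rw [Finset.sum_Ico_eq_sum_range]
  have e : m + 1 - l = (m - l) + 1 := by omega
  rw [e]
  have h : ∀ d ∈ range (m - l + 1), (-1:ℤ)^(l+d-l) * (m.choose (l+d) * (l+d).choose l)
      = (m.choose l : ℤ) * ((-1)^d * ((m-l).choose d)) := by
    intro d hd
    have hd' : d ≤ m - l := by simpa [Nat.lt_succ_iff] using hd
    have h0 := Nat.choose_mul (n := m) (k := l + d) (Nat.le_add_right l d)
    have e2 : l + d - l = d := by omega
    rw [e2] at h0 ⊢
    have h0' : (m.choose (l+d) * (l+d).choose l : ℤ) = m.choose l * (m-l).choose d := by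
      exact_mod_cast h0
    linear_combination (-1:ℤ)^d * h0'
  rw [Finset.sum_congr rfl h, ← Finset.mul_sum, Int.alternating_sum_range_choose]
  by_cases hml : m = l <;> simp [hml] <;> omega

lemma inv_key' {m l : ℕ} (hl : l ≤ m) :
    ∑ n ∈ Ico l (m+1), (-1:ℤ)^(m-n) * (m.choose n * n.choose l)
      = if m = l then 1 else 0 := by
  have h : ∀ n ∈ Ico l (m+1), (-1:ℤ)^(m-n) * (m.choose n * n.choose l)
      = (-1)^(m-l) * ((-1)^(n-l) * (m.choose n * n.choose l)) := by
    intro n hn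
    have hn' : l ≤ n ∧ n ≤ m := by simpa [Nat.lt_succ_iff] using (Finset.mem_Ico.mp hn)
    have e1 : m - n = (m-l) - (n-l) := by omega
    rw [e1, negpow_split (by omega)]
    ring
  rw [Finset.sum_congr rfl h, ← Finset.mul_sum, inv_key hl]
  by_cases hml : m = l <;> simp [hml]

lemma trinom (r s t : ℕ) :
    (r + s + t).factorial / (r.factorial * s.factorial * t.factorial)
      = (r + s + t).choose t * (r + s).choose r := by
  apply Nat.div_eq_of_eq_mul_left
  · positivity
  have h1 : (r+s).choose r * r.factorial * s.factorial = (r+s).factorial := by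
    have := Nat.choose_mul_factorial_mul_factorial (Nat.le_add_right r s)
    simpa using this
  have h2 : (r+s+t).choose t * t.factorial * (r+s).factorial = (r+s+t).factorial := by
    have := Nat.choose_mul_factorial_mul_factorial (Nat.le_add_left t (r+s))
    simpa using this
  calc (r+s+t).factorial = (r+s+t).choose t * t.factorial * (r+s).factorial := h2.symm
    _ = (r+s+t).choose t * t.factorial * ((r+s).choose r * r.factorial * s.factorial) := by
        rw [h1]
    _ = (r + s + t).choose t * (r + s).choose r * (r.factorial * s.factorial * t.factorial) := by
        ring

lemma coef_id {n i p q : ℕ} (hp : p ≤ i) (hin : i + q ≤ n) :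
    n.choose (i + q) * (i + q).choose p * ((i + q - p).choose (i - p))
      = n.choose i * i.choose p * (n - i).choose q := by
  have h1 : n.choose (i+q) * (i+q).choose p = n.choose p * (n-p).choose (i+q-p) :=
    Nat.choose_mul (by omega)
  have h2 : (n-p).choose (i+q-p) * (i+q-p).choose (i-p)
      = (n-p).choose (i-p) * ((n-p)-(i-p)).choose ((i+q-p)-(i-p)) :=
    Nat.choose_mul (by omega)
  have h3 : n.choose i * i.choose p = n.choose p * (n-p).choose (i-p) :=
    Nat.choose_mul hp
  have e1 : (n-p)-(i-p) = n-i := by omega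
  have e2 : (i+q-p)-(i-p) = q := by omega
  rw [e1, e2] at h2
  calc n.choose (i + q) * (i + q).choose p * ((i + q - p).choose (i - p))
      = n.choose p * ((n-p).choose (i+q-p) * (i+q-p).choose (i-p)) := by rw [h1]; ring
    _ = n.choose p * ((n-p).choose (i-p) * (n-i).choose q) := by rw [h2]
    _ = (n.choose i * i.choose p) * (n - i).choose q := by rw [h3]; ring

lemma val_eq {A : Type*} [Ring A] (a b : ℕ → A) (n m r s t : ℕ) (hm : r+s+t = m) (hmn : m ≤ n) :
    (n.choose m * (m.choose t * ((r+s).choose r))) • (a (r+t) * b (s+t))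
      = (n.choose (r+t) * ((r+t).choose t * (n - (r+t)).choose s)) • (a (r+t) * b (t+s)) := by
  rw [show t+s = s+t by ring]
  congr 1
  have h := coef_id (n := n) (i := r+t) (p := t) (q := s) (by omega) (by omega)
  have e1 : r+t+s = m := by omega
  have e2 : r+t+s-t = r+s := by omega
  have e3 : r+t-t = r := by omega
  rw [e2, e3, e1] at h
  simpa [mul_assoc] using h
lemma inv1 {A : Type*} [Ring A] (a : ℕ → A) : thetaBar (theta a) = a := by
  funext m
  unfold thetaBar theta
  have step : ∀ n ∈ range (m+1), m.choose n • ((-1 : ℤ) ^ (m - n) • ∑ l ∈ range (n+1), n.choose l • a l)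
      = ∑ l ∈ range (n+1), ((-1:ℤ)^(m-n) * (m.choose n * n.choose l)) • a l := by
    intro n hn
    rw [Finset.smul_sum, Finset.smul_sum]
    refine Finset.sum_congr rfl fun l hl => ?_
    rw [← natCast_zsmul (a l) (n.choose l), smul_smul, ← natCast_zsmul _ (m.choose n), smul_smul]
    congr 1; ring
  rw [Finset.sum_congr rfl step]
  have swap : ∑ n ∈ range (m+1), ∑ l ∈ range (n+1), ((-1:ℤ)^(m-n) * (m.choose n * n.choose l)) • a l
      = ∑ l ∈ range (m+1), ∑ n ∈ Ico l (m+1), ((-1:ℤ)^(m-n) * (m.choose n * n.choose l)) • a l := by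
    simp only [Finset.range_eq_Ico]
    exact (Finset.sum_Ico_Ico_comm 0 (m+1)
      fun l n => ((-1:ℤ)^(m-n) * (m.choose n * n.choose l)) • a l).symm
  rw [swap]
  have final : ∀ l ∈ range (m+1), ∑ n ∈ Ico l (m+1), ((-1:ℤ)^(m-n) * (m.choose n * n.choose l)) • a l
      = if m = l then a l else 0 := by
    intro l hl
    rw [← Finset.sum_smul, inv_key' (by simpa [Nat.lt_succ_iff] using hl)]
    by_cases h : m = l <;> simp [h]
  rw [Finset.sum_congr rfl final, Finset.sum_ite_eq, if_pos (self_mem_range_succ m)]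

lemma inv2 {A : Type*} [Ring A] (a : ℕ → A) : theta (thetaBar a) = a := by
  funext m
  unfold thetaBar theta
  have step : ∀ n ∈ range (m+1), m.choose n • ∑ l ∈ range (n+1), n.choose l • ((-1:ℤ)^(n-l) • a l)
      = ∑ l ∈ range (n+1), ((-1:ℤ)^(n-l) * (m.choose n * n.choose l)) • a l := by
    intro n hn
    rw [Finset.smul_sum]
    refine Finset.sum_congr rfl fun l hl => ?_
    rw [← natCast_zsmul ((-1:ℤ)^(n-l) • a l) (n.choose l), smul_smul,
      ← natCast_zsmul _ (m.choose n), smul_smul]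
    congr 1; ring
  rw [Finset.sum_congr rfl step]
  have swap : ∑ n ∈ range (m+1), ∑ l ∈ range (n+1), ((-1:ℤ)^(n-l) * (m.choose n * n.choose l)) • a l
      = ∑ l ∈ range (m+1), ∑ n ∈ Ico l (m+1), ((-1:ℤ)^(n-l) * (m.choose n * n.choose l)) • a l := by
    simp only [Finset.range_eq_Ico]
    exact (Finset.sum_Ico_Ico_comm 0 (m+1)
      fun l n => ((-1:ℤ)^(n-l) * (m.choose n * n.choose l)) • a l).symm
  rw [swap]
  have final : ∀ l ∈ range (m+1), ∑ n ∈ Ico l (m+1), ((-1:ℤ)^(n-l) * (m.choose n * n.choose l)) • a l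
      = if m = l then a l else 0 := by
    intro l hl
    rw [← Finset.sum_smul, inv_key (by simpa [Nat.lt_succ_iff] using hl)]
    by_cases h : m = l <;> simp [h]
  rw [Finset.sum_congr rfl final, Finset.sum_ite_eq, if_pos (self_mem_range_succ m)]

lemma mult {k A : Type*} [CommRing k] [Ring A] [Algebra k A] (a b : ℕ → A) (n : ℕ) :
    theta (hur (1 : k) a b) n = theta a n * theta b n := by
  classical
  set F : ℕ × ℕ × ℕ → A := fun z =>
    (n.choose z.1 * (z.1.choose z.2.1 * (n - z.1).choose z.2.2)) • (a z.1 * b (z.2.1 + z.2.2))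
    with hF
  set cube : Finset (ℕ × ℕ × ℕ) := range (n+1) ×ˢ range (n+1) ×ˢ range (n+1) with hcube
  have cube_mem : ∀ z : ℕ × ℕ × ℕ, z ∈ cube ↔ z.1 ≤ n ∧ z.2.1 ≤ n ∧ z.2.2 ≤ n := by
    intro z
    simp [hcube, Finset.mem_product, Nat.lt_succ_iff]
  -- Step 1: LHS as nested sum with binomial coefficients
  have step1 : theta (hur (1 : k) a b) n
      = ∑ m ∈ range (n+1), ∑ x ∈ antidiagonal m, ∑ y ∈ antidiagonal x.2,
          (n.choose m * (m.choose y.2 * ((x.1 + y.1).choose x.1))) • (a (x.1+y.2) * b (y.1+y.2)) := by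
    unfold theta hur
    refine Finset.sum_congr rfl fun m hm => ?_
    rw [Finset.smul_sum]
    refine Finset.sum_congr rfl fun x hx => ?_
    rw [Finset.smul_sum]
    refine Finset.sum_congr rfl fun y hy => ?_
    have hx' := Finset.HasAntidiagonal.mem_antidiagonal.mp hx
    have hy' := Finset.HasAntidiagonal.mem_antidiagonal.mp hy
    have hsum : x.1 + y.1 + y.2 = m := by omega
    rw [one_pow, one_smul, smul_smul]
    congr 1
    rw [← hsum, trinom]
  -- Step 2: LHS equals sum of F over filtered cube
  have step2 : (∑ m ∈ range (n+1), ∑ x ∈ antidiagonal m, ∑ y ∈ antidiagonal x.2,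
        (n.choose m * (m.choose y.2 * ((x.1 + y.1).choose x.1))) • (a (x.1+y.2) * b (y.1+y.2)))
      = ∑ z ∈ cube.filter (fun z => z.2.1 ≤ z.1 ∧ z.1 + z.2.2 ≤ n), F z := by
    rw [Finset.sum_sigma', Finset.sum_sigma']
    refine Finset.sum_nbij' (fun w => (w.1.2.1 + w.2.2, w.2.2, w.2.1))
      (fun z => ⟨⟨z.1 + z.2.2, (z.1 - z.2.1, z.2.1 + z.2.2)⟩, (z.2.2, z.2.1)⟩)
      ?_ ?_ ?_ ?_ ?_
    · rintro ⟨⟨m, r, u⟩, s, t⟩ hw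
      simp only [Finset.mem_sigma, Finset.mem_range, Finset.HasAntidiagonal.mem_antidiagonal] at hw
      simp only [Finset.mem_filter, cube_mem]
      omega
    · rintro ⟨i, p, q⟩ hz
      simp only [Finset.mem_filter, cube_mem] at hz
      simp only [Finset.mem_sigma, Finset.mem_range, Finset.HasAntidiagonal.mem_antidiagonal]
      omega
    · rintro ⟨⟨m, r, u⟩, s, t⟩ hw
      simp only [Finset.mem_sigma, Finset.mem_range, Finset.HasAntidiagonal.mem_antidiagonal] at hw
      have e1 : r + t + s = m := by omega
      have e2 : r + t - t = r := by omega
      have e3 : t + s = u := by omega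
      simp [e1, e2, e3]
    · rintro ⟨i, p, q⟩ hz
      rw [Finset.mem_filter] at hz
      obtain ⟨-, hP⟩ := hz
      have hP' : p ≤ i ∧ i + q ≤ n := hP
      have e : i - p + p = i := by omega
      simp [e]
    · rintro ⟨⟨m, r, u⟩, s, t⟩ hw
      simp only [Finset.mem_sigma, Finset.mem_range, Finset.HasAntidiagonal.mem_antidiagonal] at hw
      simp only [hF]
      exact val_eq a b n m r s t (by omega) (by omega)
  -- Step 3: extend filtered sum to cube
  have step3 : (∑ z ∈ cube.filter (fun z => z.2.1 ≤ z.1 ∧ z.1 + z.2.2 ≤ n), F z)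
      = ∑ z ∈ cube, F z := by
    refine Finset.sum_subset (Finset.filter_subset _ _) ?_
    rintro ⟨i, p, q⟩ hz hnz
    have hzc := (cube_mem _).mp hz
    have hP : ¬ (p ≤ i ∧ i + q ≤ n) := by
      intro hc
      exact hnz (Finset.mem_filter.mpr ⟨hz, hc⟩)
    rcases Nat.lt_or_ge i p with h | h
    · simp [hF, Nat.choose_eq_zero_of_lt h]
    · have h2 : n - i < q := by omega
      simp [hF, Nat.choose_eq_zero_of_lt h2]
  -- Step 4: RHS as triple sum
  have step4 : theta a n * theta b n
      = ∑ i ∈ range (n+1), ∑ j ∈ range (n+1), ∑ p ∈ range (j+1),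
          (n.choose i * (i.choose p * (n-i).choose (j-p))) • (a i * b j) := by
    unfold theta
    rw [Finset.sum_mul_sum]
    refine Finset.sum_congr rfl fun i hi => ?_
    refine Finset.sum_congr rfl fun j hj => ?_
    rw [Finset.mem_range, Nat.lt_succ_iff] at hi
    have hv : n.choose j = ∑ p ∈ range (j+1), i.choose p * ((n-i).choose (j-p)) := by
      conv_lhs => rw [show n = i + (n - i) by omega]
      rw [Nat.add_choose_eq, Finset.Nat.sum_antidiagonal_eq_sum_range_succ_mk]
    rw [smul_mul_smul_comm, hv, Finset.mul_sum, Finset.sum_smul]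
  -- Step 5: RHS triple sum equals sum of F over Q-filtered cube
  have step5 : (∑ i ∈ range (n+1), ∑ j ∈ range (n+1), ∑ p ∈ range (j+1),
        (n.choose i * (i.choose p * (n-i).choose (j-p))) • (a i * b j))
      = ∑ z ∈ cube.filter (fun z => z.2.1 + z.2.2 ≤ n), F z := by
    rw [Finset.sum_sigma', Finset.sum_sigma']
    refine Finset.sum_nbij' (fun w => (w.1.1, w.2, w.1.2 - w.2))
      (fun z => ⟨⟨z.1, z.2.1 + z.2.2⟩, z.2.1⟩) ?_ ?_ ?_ ?_ ?_
    · rintro ⟨⟨i, j⟩, p⟩ hw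
      simp only [Finset.mem_sigma, Finset.mem_range, Nat.lt_succ_iff] at hw
      simp only [Finset.mem_filter, cube_mem]
      omega
    · rintro ⟨i, p, q⟩ hz
      simp only [Finset.mem_filter, cube_mem] at hz
      simp only [Finset.mem_sigma, Finset.mem_range, Nat.lt_succ_iff]
      omega
    · rintro ⟨⟨i, j⟩, p⟩ hw
      simp only [Finset.mem_sigma, Finset.mem_range, Nat.lt_succ_iff] at hw
      have e : p + (j - p) = j := by omega
      simp [e]
    · rintro ⟨i, p, q⟩ hz
      rw [Finset.mem_filter] at hz
      obtain ⟨-, hP⟩ := hz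
      have hP' : p + q ≤ n := hP
      have e : p + q - p = q := by omega
      simp [e]
    · rintro ⟨⟨i, j⟩, p⟩ hw
      simp only [Finset.mem_sigma, Finset.mem_range, Nat.lt_succ_iff] at hw
      have e : p + (j - p) = j := by omega
      simp only [hF, e]
  -- Step 6: extend Q-filtered sum to cube
  have step6 : (∑ z ∈ cube.filter (fun z => z.2.1 + z.2.2 ≤ n), F z)
      = ∑ z ∈ cube, F z := by
    refine Finset.sum_subset (Finset.filter_subset _ _) ?_
    rintro ⟨i, p, q⟩ hz hnz
    have hzc := (cube_mem _).mp hz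
    have hq : ¬ (p + q ≤ n) := by
      intro hc
      exact hnz (Finset.mem_filter.mpr ⟨hz, hc⟩)
    rcases Nat.lt_or_ge i p with h | h
    · simp [hF, Nat.choose_eq_zero_of_lt h]
    · have h2 : n - i < q := by omega
      simp [hF, Nat.choose_eq_zero_of_lt h2]
  rw [step1, step2, step3, step4, step5, step6]

/-- `θ` is a `k`-algebra isomorphism from `(A^ℕ, ·^1)` to `A^ℕ` with the
pointwise product: it is `k`-linear, sends `J` to the constant sequence `1`, is
multiplicative, and has two-sided inverse `θ̄`. -/
theorem stmt5 {k A : Type*} [CommRing k] [Algebra ℚ k] [Ring A] [Algebra k A] :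
    (∀ a b : ℕ → A, theta (a + b) = theta a + theta b) ∧
    (∀ (r : k) (a : ℕ → A), theta (r • a) = r • theta a) ∧
    (theta (Jseq A) = fun _ => (1 : A)) ∧
    (∀ a b : ℕ → A, ∀ n, theta (hur (1 : k) a b) n = theta a n * theta b n) ∧
    (∀ a : ℕ → A, thetaBar (theta a) = a) ∧
    (∀ a : ℕ → A, theta (thetaBar a) = a) := by
  refine ⟨?_, ?_, ?_, fun a b n => mult a b n, inv1, inv2⟩
  · intro a b
    funext n
    simp [theta, Finset.sum_add_distrib, smul_add]
  · intro r a
    funext n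
    rw [Pi.smul_apply]
    unfold theta
    rw [Finset.smul_sum]
    exact Finset.sum_congr rfl fun m hm => by rw [Pi.smul_apply, smul_comm]
  · funext n
    unfold theta Jseq
    rw [Finset.sum_eq_single 0]
    · simp
    · intro m hm hm0
      simp [hm0]
    · simp
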